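/- Let H be a symmetric q × q real matrix with eigenvalues in [m, M], 0 < m ≤ M, let r > 0, let G ∈ ℝ^{n_y×q} with ‖G‖_F ≤ ε̄, let Φ̃ ∈ ℝ^{n_y×q}, and set Φ̃⁺ = Φ̃(I_q − rH) + rG. Then, with V(Φ) = (1/r)‖Φ‖_F², V(Φ̃⁺) − V(Φ̃) ≤ (rM² − 2m)·‖Φ̃‖_F² + 2(1 + rM)·ε̄·‖Φ̃‖_F + r·ε̄². -/
import Mathlib


open Matrix

/-- Frobenius norm of a real matrix. -/
noncomputable def frobNorm {a b : ℕ} (A : Matrix (Fin a) (Fin b) ℝ) : ℝ :=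
  Real.sqrt (∑ i, ∑ j, (A i j) ^ 2)

lemma dotSelf_nonneg {k : ℕ} (v : Fin k → ℝ) : 0 ≤ v ⬝ᵥ v :=
  Finset.sum_nonneg fun i _ => mul_self_nonneg _

lemma dot_le_sqrt {k : ℕ} (v w : Fin k → ℝ) :
    v ⬝ᵥ w ≤ Real.sqrt (v ⬝ᵥ v) * Real.sqrt (w ⬝ᵥ w) := by
  have := Real.sum_mul_le_sqrt_mul_sqrt Finset.univ v w
  simpa [dotProduct, ← sq] using this

lemma spec_bounds {q : ℕ} (m M : ℝ) (hm : 0 ≤ m) (hM : 0 ≤ M)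
    (H : Matrix (Fin q) (Fin q) ℝ) (hH : H.IsHermitian)
    (heig : ∀ i, m ≤ hH.eigenvalues i ∧ hH.eigenvalues i ≤ M) (x : Fin q → ℝ) :
    m * (x ⬝ᵥ x) ≤ x ⬝ᵥ (H *ᵥ x) ∧ (H *ᵥ x) ⬝ᵥ (H *ᵥ x) ≤ M ^ 2 * (x ⬝ᵥ x) := by
  classical
  set U : Matrix (Fin q) (Fin q) ℝ := (hH.eigenvectorUnitary : Matrix (Fin q) (Fin q) ℝ) with hUdef
  set D : Matrix (Fin q) (Fin q) ℝ := diagonal hH.eigenvalues with hDdef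
  have hT : star U = Uᵀ := by
    rw [Matrix.star_eq_conjTranspose, Matrix.conjTranspose_eq_transpose_of_trivial]
  have hU1 : U * star U = 1 := (Matrix.mem_unitaryGroup_iff).mp hH.eigenvectorUnitary.2
  have hU2 : star U * U = 1 := (Matrix.mem_unitaryGroup_iff').mp hH.eigenvectorUnitary.2
  have hspec : H = U * D * star U := by
    have h1 := hH.spectral_theorem
    have hcoe : (RCLike.ofReal ∘ hH.eigenvalues : Fin q → ℝ) = hH.eigenvalues := by
      funext i; simp
    rw [hcoe] at h1
    exact h1
  set y : Fin q → ℝ := star U *ᵥ x with hydef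
  have hx : U *ᵥ y = x := by
    rw [hydef, mulVec_mulVec, hU1, one_mulVec]
  have orth : ∀ v z : Fin q → ℝ, (U *ᵥ v) ⬝ᵥ z = v ⬝ᵥ (Uᵀ *ᵥ z) := by
    intro v z
    rw [dotProduct_mulVec, vecMul_transpose]
  have hUU : ∀ v w : Fin q → ℝ, (U *ᵥ v) ⬝ᵥ (U *ᵥ w) = v ⬝ᵥ w := by
    intro v w
    rw [orth, mulVec_mulVec, ← hT, hU2, one_mulVec]
  have hxx : x ⬝ᵥ x = y ⬝ᵥ y := by rw [← hx, hUU]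
  have hHx : H *ᵥ x = U *ᵥ (D *ᵥ y) := by
    rw [hspec, ← mulVec_mulVec, ← mulVec_mulVec, ← hydef]
  have hq : x ⬝ᵥ (H *ᵥ x) = ∑ i, y i * (hH.eigenvalues i * y i) := by
    rw [hHx]
    conv_lhs => rw [← hx]
    rw [hUU]
    simp [hDdef, dotProduct, mulVec_diagonal]
  have hn : (H *ᵥ x) ⬝ᵥ (H *ᵥ x)
      = ∑ i, (hH.eigenvalues i * y i) * (hH.eigenvalues i * y i) := by
    rw [hHx, hUU]
    simp [hDdef, dotProduct, mulVec_diagonal]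
  constructor
  · rw [hxx, hq, dotProduct, Finset.mul_sum]
    apply Finset.sum_le_sum
    intro i _
    nlinarith [mul_self_nonneg (y i), (heig i).1]
  · rw [hxx, hn, dotProduct, Finset.mul_sum]
    apply Finset.sum_le_sum
    intro i _
    nlinarith [mul_self_nonneg (y i), mul_le_mul (heig i).2 (heig i).2 (le_trans hm (heig i).1) hM]

/-- One-step Lyapunov difference bound with disturbance: for
`Φ̃⁺ = Φ̃(I − rH) + rG`, `‖G‖_F ≤ ε̄`, and `V(Φ) = (1/r)‖Φ‖_F²`,
`V(Φ̃⁺) − V(Φ̃) ≤ (rM² − 2m)‖Φ̃‖_F² + 2(1 + rM)ε̄‖Φ̃‖_F + rε̄²`. -/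
theorem lyapunov_difference_disturbed {q ny : ℕ} (m M r ε : ℝ)
    (hm : 0 < m) (hmM : m ≤ M) (hr : 0 < r)
    (H : Matrix (Fin q) (Fin q) ℝ) (hH : H.IsHermitian)
    (heig : ∀ i, m ≤ hH.eigenvalues i ∧ hH.eigenvalues i ≤ M)
    (G : Matrix (Fin ny) (Fin q) ℝ) (hG : frobNorm G ≤ ε)
    (Φt : Matrix (Fin ny) (Fin q) ℝ) :
    let Φt' := Φt * ((1 : Matrix (Fin q) (Fin q) ℝ) - r • H) + r • G
    (1 / r) * frobNorm Φt' ^ 2 - (1 / r) * frobNorm Φt ^ 2 ≤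
      (r * M ^ 2 - 2 * m) * frobNorm Φt ^ 2 +
        2 * (1 + r * M) * ε * frobNorm Φt + r * ε ^ 2 := by
  intro Φt'
  classical
  have hM : 0 < M := lt_of_lt_of_le hm hmM
  have hsym : ∀ a b, H a b = H b a := by
    intro a b
    conv_lhs => rw [← hH]
    simp [conjTranspose_apply]
  -- rows of Φt'
  have hrow : ∀ i, Φt' i = Φt i - r • (H *ᵥ Φt i) + r • G i := by
    intro i
    funext j
    simp only [Φt', Matrix.add_apply, Matrix.smul_apply, Matrix.mul_apply, Matrix.sub_apply,
      Matrix.one_apply, Pi.add_apply, Pi.sub_apply, Pi.smul_apply, mulVec, dotProduct,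
      smul_eq_mul, mul_sub, Finset.sum_sub_distrib, Finset.mul_sum]
    congr 2
    · simp [mul_ite]
    · refine Finset.sum_congr rfl fun k _ => ?_
      rw [hsym j k]; ring
  -- per-row bound
  have rowb : ∀ i, Φt' i ⬝ᵥ Φt' i ≤
      (1 - 2 * r * m + r ^ 2 * M ^ 2) * (Φt i ⬝ᵥ Φt i) +
        (2 * r * (1 + r * M)) * (Real.sqrt (Φt i ⬝ᵥ Φt i) * Real.sqrt (G i ⬝ᵥ G i)) +
        r ^ 2 * (G i ⬝ᵥ G i) := by
    intro i
    rw [hrow i]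
    set x := Φt i with hxdef
    set g := G i with hgdef
    set h := H *ᵥ x with hhdef
    have expand : (x - r • h + r • g) ⬝ᵥ (x - r • h + r • g) =
        x ⬝ᵥ x - 2 * r * (x ⬝ᵥ h) + r ^ 2 * (h ⬝ᵥ h) + 2 * r * (x ⬝ᵥ g)
          - 2 * r ^ 2 * (h ⬝ᵥ g) + r ^ 2 * (g ⬝ᵥ g) := by
      simp only [dotProduct_add, add_dotProduct, dotProduct_sub, sub_dotProduct,
        dotProduct_smul, smul_dotProduct, smul_eq_mul, dotProduct_comm h x,
        dotProduct_comm g x, dotProduct_comm g h]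
      ring
    obtain ⟨hq1, hq2⟩ := spec_bounds m M hm.le hM.le H hH heig x
    rw [← hhdef] at hq1 hq2
    have ha0 : 0 ≤ Real.sqrt (x ⬝ᵥ x) := Real.sqrt_nonneg _
    have hb0 : 0 ≤ Real.sqrt (g ⬝ᵥ g) := Real.sqrt_nonneg _
    have cs1 : x ⬝ᵥ g ≤ Real.sqrt (x ⬝ᵥ x) * Real.sqrt (g ⬝ᵥ g) := dot_le_sqrt x g
    have cs2 : -(h ⬝ᵥ g) ≤ M * Real.sqrt (x ⬝ᵥ x) * Real.sqrt (g ⬝ᵥ g) := by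
      have h1 : (-h) ⬝ᵥ g ≤ Real.sqrt ((-h) ⬝ᵥ (-h)) * Real.sqrt (g ⬝ᵥ g) := dot_le_sqrt _ _
      have h2 : (-h) ⬝ᵥ (-h) = h ⬝ᵥ h := by simp
      have h3 : Real.sqrt (h ⬝ᵥ h) ≤ M * Real.sqrt (x ⬝ᵥ x) := by
        calc Real.sqrt (h ⬝ᵥ h) ≤ Real.sqrt (M ^ 2 * (x ⬝ᵥ x)) := Real.sqrt_le_sqrt hq2
        _ = M * Real.sqrt (x ⬝ᵥ x) := by
            rw [Real.sqrt_mul (sq_nonneg M), Real.sqrt_sq hM.le]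
      rw [h2] at h1
      calc -(h ⬝ᵥ g) = (-h) ⬝ᵥ g := by rw [neg_dotProduct]
      _ ≤ Real.sqrt (h ⬝ᵥ h) * Real.sqrt (g ⬝ᵥ g) := h1
      _ ≤ M * Real.sqrt (x ⬝ᵥ x) * Real.sqrt (g ⬝ᵥ g) :=
          mul_le_mul_of_nonneg_right h3 hb0
    rw [expand]
    nlinarith [hq1, hq2, cs1, cs2, hr, hr.le, sq_nonneg r, mul_pos hr hr]
  -- Frobenius identities
  have key : ∀ {a b : ℕ} (A : Matrix (Fin a) (Fin b) ℝ),
      frobNorm A ^ 2 = ∑ i, A i ⬝ᵥ A i := by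
    intro a b A
    unfold frobNorm
    rw [Real.sq_sqrt (by positivity)]
    exact Finset.sum_congr rfl fun i _ => by simp [dotProduct, sq]
  have hFdef : ∀ {a b : ℕ} (A : Matrix (Fin a) (Fin b) ℝ),
      frobNorm A = Real.sqrt (∑ i, A i ⬝ᵥ A i) := by
    intro a b A
    unfold frobNorm
    congr 1
    exact Finset.sum_congr rfl fun i _ => by simp [dotProduct, sq]
  -- sum over rows
  have csum : ∑ i, Real.sqrt (Φt i ⬝ᵥ Φt i) * Real.sqrt (G i ⬝ᵥ G i) ≤
      frobNorm Φt * frobNorm G := by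
    rw [hFdef Φt, hFdef G]
    exact Real.sum_sqrt_mul_sqrt_le Finset.univ (fun i => dotSelf_nonneg _)
      (fun i => dotSelf_nonneg _)
  have hsum : frobNorm Φt' ^ 2 ≤
      (1 - 2 * r * m + r ^ 2 * M ^ 2) * frobNorm Φt ^ 2 +
        (2 * r * (1 + r * M)) * (frobNorm Φt * frobNorm G) +
        r ^ 2 * frobNorm G ^ 2 := by
    rw [key Φt', key Φt, key G]
    calc ∑ i, Φt' i ⬝ᵥ Φt' i
        ≤ ∑ i, ((1 - 2 * r * m + r ^ 2 * M ^ 2) * (Φt i ⬝ᵥ Φt i) +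
            (2 * r * (1 + r * M)) * (Real.sqrt (Φt i ⬝ᵥ Φt i) * Real.sqrt (G i ⬝ᵥ G i)) +
            r ^ 2 * (G i ⬝ᵥ G i)) := Finset.sum_le_sum fun i _ => rowb i
      _ = (1 - 2 * r * m + r ^ 2 * M ^ 2) * (∑ i, Φt i ⬝ᵥ Φt i) +
            (2 * r * (1 + r * M)) *
              (∑ i, Real.sqrt (Φt i ⬝ᵥ Φt i) * Real.sqrt (G i ⬝ᵥ G i)) +
            r ^ 2 * (∑ i, G i ⬝ᵥ G i) := by
          simp [Finset.sum_add_distrib, Finset.mul_sum]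
      _ ≤ _ := by
          have hc : (0:ℝ) ≤ 2 * r * (1 + r * M) := by positivity
          linarith [mul_le_mul_of_nonneg_left csum hc]
  -- conclude
  have hFx0 : 0 ≤ frobNorm Φt := Real.sqrt_nonneg _
  have hFG0 : 0 ≤ frobNorm G := Real.sqrt_nonneg _
  have hε0 : 0 ≤ ε := le_trans hFG0 hG
  have heq : (1 / r) * frobNorm Φt' ^ 2 - (1 / r) * frobNorm Φt ^ 2 =
      (frobNorm Φt' ^ 2 - frobNorm Φt ^ 2) / r := by ring
  rw [heq, div_le_iff₀ hr]
  have h1 : (2 * r * (1 + r * M)) * (frobNorm Φt * frobNorm G) ≤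
      (2 * r * (1 + r * M)) * (frobNorm Φt * ε) := by
    apply mul_le_mul_of_nonneg_left _ (by positivity)
    exact mul_le_mul_of_nonneg_left hG hFx0
  have h2 : r ^ 2 * frobNorm G ^ 2 ≤ r ^ 2 * ε ^ 2 := by
    apply mul_le_mul_of_nonneg_left _ (sq_nonneg r)
    exact pow_le_pow_left₀ hFG0 hG 2
  nlinarith [hsum, h1, h2]
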